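/- Let C ⊆ ℝ^p be a nonempty closed convex set with nearest-point projection P_C, let θ* ∈ C, let g : ℝ^p → ℝ be convex and differentiable with L-Lipschitz gradient (L > 0), let ρ > 0, and let w = P_C(w') for some w' ∈ ℝ^p and θ⁺ ∈ ℝ^p satisfy the implicit update θ⁺ = w − (1/ρ)∇g(θ⁺). Then ‖P_C(θ⁺) − θ*‖² ≤ (1 + 4L²/ρ²)‖w − θ*‖² − (2/ρ)(g(w) − g(θ*)) + (4/ρ²)‖∇g(θ*)‖². -/

import Mathlib

open RealInnerProductSpace

/-- Gradient inequality for a convex differentiable function. -/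
lemma grad_ineq_aux {p : ℕ} (g : EuclideanSpace ℝ (Fin p) → ℝ)
    (hgconv : ConvexOn ℝ Set.univ g) (hgdiff : Differentiable ℝ g)
    (x y : EuclideanSpace ℝ (Fin p)) :
    g x + ⟪gradient g x, y - x⟫ ≤ g y := by
  set φ : ℝ → ℝ := fun t => g (x + t • (y - x)) with hφ
  have hφconv : ConvexOn ℝ Set.univ φ := by
    have h := hgconv.comp_affineMap (AffineMap.lineMap x y)
    have : (g ∘ ⇑(AffineMap.lineMap x y)) = φ := by
      funext t
      simp [φ, AffineMap.lineMap_apply, add_comm, vsub_eq_sub, vadd_eq_add]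
    rw [this] at h
    simpa using h
  have hc : HasDerivAt (fun t : ℝ => x + t • (y - x)) (y - x) 0 := by
    simpa using ((hasDerivAt_id (0:ℝ)).smul_const (y - x)).const_add x
  have hg' : HasFDerivAt g ((InnerProductSpace.toDual ℝ _) (gradient g x)) x := by
    rw [← hasGradientAt_iff_hasFDerivAt]
    exact (hgdiff x).hasGradientAt
  have hg'' : HasFDerivAt g ((InnerProductSpace.toDual ℝ _) (gradient g x))
      ((fun t : ℝ => x + t • (y - x)) 0) := by simpa using hg'
  have hd : HasDerivAt φ ⟪gradient g x, y - x⟫ 0 := by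
    have := hg''.comp_hasDerivAt 0 hc
    simpa [φ, Function.comp_def, InnerProductSpace.toDual_apply_apply] using this
  have hslope := hφconv.le_slope_of_hasDerivAt (Set.mem_univ (0:ℝ)) (Set.mem_univ 1)
    one_pos hd
  have h01 : slope φ 0 1 = g y - g x := by
    simp [slope_def_field, φ]
  rw [h01] at hslope
  linarith

/-- Projection characterization. -/
lemma proj_inner_aux {p : ℕ} (C : Set (EuclideanSpace ℝ (Fin p)))
    (hCconv : Convex ℝ C)
    (P : EuclideanSpace ℝ (Fin p) → EuclideanSpace ℝ (Fin p))
    (hP : ∀ x, P x ∈ C ∧ ∀ y ∈ C, ‖x - P x‖ ≤ ‖x - y‖)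
    (x : EuclideanSpace ℝ (Fin p)) :
    ∀ v ∈ C, ⟪x - P x, v - P x⟫ ≤ 0 := by
  have hmem := (hP x).1
  haveI : Nonempty C := ⟨⟨P x, hmem⟩⟩
  have hinf : ‖x - P x‖ = ⨅ w : C, ‖x - (w : EuclideanSpace ℝ (Fin p))‖ := by
    apply le_antisymm
    · exact le_ciInf fun w => (hP x).2 w w.2
    · exact ciInf_le ⟨0, fun r ⟨w, hw⟩ => hw ▸ norm_nonneg _⟩ (⟨P x, hmem⟩ : C)
  exact (norm_eq_iInf_iff_real_inner_le_zero hCconv hmem).mp hinf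

set_option maxHeartbeats 1000000 in
/-- One-step recursion bound for the projected implicit update, with an
L-Lipschitz gradient:
‖P_C(θ⁺) − θ*‖² ≤ (1 + 4L²/ρ²)‖w − θ*‖² − (2/ρ)(g(w) − g(θ*)) + (4/ρ²)‖∇g(θ*)‖². -/
theorem stmt_6 {p : ℕ} (C : Set (EuclideanSpace ℝ (Fin p)))
    (hCne : C.Nonempty) (hCclosed : IsClosed C) (hCconv : Convex ℝ C)
    (P : EuclideanSpace ℝ (Fin p) → EuclideanSpace ℝ (Fin p))
    (hP : ∀ x, P x ∈ C ∧ ∀ y ∈ C, ‖x - P x‖ ≤ ‖x - y‖)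
    (θstar : EuclideanSpace ℝ (Fin p)) (hθstar : θstar ∈ C)
    (g : EuclideanSpace ℝ (Fin p) → ℝ)
    (hgconv : ConvexOn ℝ Set.univ g) (hgdiff : Differentiable ℝ g)
    (L : ℝ) (hL : 0 < L)
    (hLip : ∀ x y, ‖gradient g x - gradient g y‖ ≤ L * ‖x - y‖)
    (ρ : ℝ) (hρ : 0 < ρ)
    (w w' θplus : EuclideanSpace ℝ (Fin p)) (hw : w = P w')
    (hupd : θplus = w - (1 / ρ) • gradient g θplus) :
    ‖P θplus - θstar‖ ^ 2 ≤
      (1 + 4 * L ^ 2 / ρ ^ 2) * ‖w - θstar‖ ^ 2 -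
        (2 / ρ) * (g w - g θstar) + (4 / ρ ^ 2) * ‖gradient g θstar‖ ^ 2 := by
  set s : ℝ := 1 / ρ with hs
  have hspos : 0 < s := by positivity
  set G := gradient g θplus with hG
  set Gs := gradient g θstar with hGs
  set Gw := gradient g w with hGw
  set q := P θplus with hq
  -- Step A: projection is nonexpansive towards θstar
  have hpA : ⟪θplus - q, θstar - q⟫ ≤ 0 :=
    proj_inner_aux C hCconv P hP θplus θstar hθstar
  have hA : ‖q - θstar‖ ^ 2 ≤ ‖θplus - θstar‖ ^ 2 := by
    have hexp : ‖(θplus - q) - (θstar - q)‖ ^ 2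
        = ‖θplus - q‖ ^ 2 - 2 * ⟪θplus - q, θstar - q⟫ + ‖θstar - q‖ ^ 2 :=
      norm_sub_sq_real _ _
    have he : (θplus - q) - (θstar - q) = θplus - θstar := by abel
    rw [he] at hexp
    have hnn : (0:ℝ) ≤ ‖θplus - q‖ ^ 2 := sq_nonneg _
    have hflip : ‖θstar - q‖ = ‖q - θstar‖ := norm_sub_rev _ _
    rw [hflip] at hexp
    linarith
  -- Step B: expand ‖θplus − θstar‖²
  have hθw : θplus - θstar = (w - θstar) - s • G := by
    rw [hupd]; abel
  have hB : ‖θplus - θstar‖ ^ 2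
      = ‖w - θstar‖ ^ 2 - 2 * (s * ⟪w - θstar, G⟫) + s ^ 2 * ‖G‖ ^ 2 := by
    rw [hθw, norm_sub_sq_real, real_inner_smul_right, norm_smul]
    rw [Real.norm_eq_abs, abs_of_pos hspos]
    ring
  -- inner product decomposition: w − θstar = (θplus − θstar) + s • G
  have hwθ : w - θstar = (θplus - θstar) + s • G := by
    rw [hupd]; abel
  have hinner : ⟪w - θstar, G⟫ = ⟪θplus - θstar, G⟫ + s * ‖G‖ ^ 2 := by
    rw [hwθ, inner_add_left, real_inner_smul_left, real_inner_self_eq_norm_sq]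
  -- convexity inequalities
  have h1 : g θplus + ⟪G, θstar - θplus⟫ ≤ g θstar :=
    grad_ineq_aux g hgconv hgdiff θplus θstar
  have h1' : g θplus - g θstar ≤ ⟪θplus - θstar, G⟫ := by
    have : ⟪G, θstar - θplus⟫ = - ⟪θplus - θstar, G⟫ := by
      rw [real_inner_comm]
      rw [show θstar - θplus = -(θplus - θstar) by abel, inner_neg_left]
    linarith [h1, this ▸ h1]
  have h2 : g w + ⟪Gw, θplus - w⟫ ≤ g θplus :=
    grad_ineq_aux g hgconv hgdiff w θplus
  have h2' : g w - s * ⟪Gw, G⟫ ≤ g θplus := by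
    have hd : θplus - w = -(s • G) := by rw [hupd]; abel
    rw [hd, inner_neg_right, real_inner_smul_right] at h2
    linarith
  -- Cauchy-Schwarz-ish: 2⟪Gw,G⟫ − ‖G‖² ≤ ‖Gw‖²
  have hCS : 2 * ⟪Gw, G⟫ - ‖G‖ ^ 2 ≤ ‖Gw‖ ^ 2 := by
    have := norm_sub_sq_real Gw G
    nlinarith [sq_nonneg ‖Gw - G‖]
  -- Lipschitz bound on ‖Gw‖²
  have hLw : ‖Gw‖ ≤ L * ‖w - θstar‖ + ‖Gs‖ := by
    calc ‖Gw‖ = ‖(Gw - Gs) + Gs‖ := by congr 1; abel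
      _ ≤ ‖Gw - Gs‖ + ‖Gs‖ := norm_add_le _ _
      _ ≤ L * ‖w - θstar‖ + ‖Gs‖ := by
          have := hLip w θstar
          linarith
  have hLw2 : ‖Gw‖ ^ 2 ≤ 2 * L ^ 2 * ‖w - θstar‖ ^ 2 + 2 * ‖Gs‖ ^ 2 := by
    have hsq : ‖Gw‖ ^ 2 ≤ (L * ‖w - θstar‖ + ‖Gs‖) ^ 2 :=
      pow_le_pow_left₀ (norm_nonneg Gw) hLw 2
    nlinarith [hsq, sq_nonneg (L * ‖w - θstar‖ - ‖Gs‖)]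
  -- combine
  have hM1 : ‖θplus - θstar‖ ^ 2 = ‖w - θstar‖ ^ 2
      - 2 * s * ⟪θplus - θstar, G⟫ - s ^ 2 * ‖G‖ ^ 2 := by
    rw [hB, hinner]; ring
  have h2s : (0:ℝ) ≤ 2 * s := by positivity
  have c1 := mul_le_mul_of_nonneg_left h1' h2s
  have c2 := mul_le_mul_of_nonneg_left h2' h2s
  have c3 := mul_le_mul_of_nonneg_left hCS (sq_nonneg s)
  have c4 := mul_le_mul_of_nonneg_left hLw2 (sq_nonneg s)
  have hx1 : (0:ℝ) ≤ L ^ 2 * s ^ 2 * ‖w - θstar‖ ^ 2 := by positivity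
  have hx2 : (0:ℝ) ≤ s ^ 2 * ‖Gs‖ ^ 2 := by positivity
  have hkey : ‖q - θstar‖ ^ 2 ≤
      (1 + 4 * L ^ 2 * s ^ 2) * ‖w - θstar‖ ^ 2 -
        (2 * s) * (g w - g θstar) + (4 * s ^ 2) * ‖Gs‖ ^ 2 := by
    nlinarith [hA, hM1, c1, c2, c3, c4, hx1, hx2]
  have e1 : 1 + 4 * L ^ 2 / ρ ^ 2 = 1 + 4 * L ^ 2 * s ^ 2 := by
    rw [hs]; field_simp
  have e2 : (2:ℝ) / ρ = 2 * s := by rw [hs]; ring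
  have e3 : (4:ℝ) / ρ ^ 2 = 4 * s ^ 2 := by rw [hs]; field_simp
  rw [e1, e2, e3]
  exact hkey
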